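/- In the education signaling game specified in the context, the strategy profile π* in which both worker types choose D with probability 1 and the employer plays π₂*(low|N) = 1, π₂*(low|C) = 1, π₂*(med|D) = 1 is a rationality-compatible equilibrium (RCE) but is not a uniform rationality-compatible equilibrium (uRCE). -/

import Mathlib

open scoped Classical
open Finset Filter

noncomputable section

/-- `p` is a probability distribution on the finite type `X`. -/
def IsDist {X : Type*} [Fintype X] (p : X → ℝ) : Prop :=
  (∀ x, 0 ≤ p x) ∧ ∑ x, p x = 1

variable {Θ S A : Type*} [Fintype Θ] [Fintype S] [Fintype A]

/-- Sender's expected payoff `u₁(θ, s, π₂(·|s))` from signal `s` when the receiver plays `π₂`. -/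
def u1R (u₁ : Θ → S → A → ℝ) (π₂ : S → A → ℝ) (θ : Θ) (s : S) : ℝ :=
  ∑ a, π₂ s a * u₁ θ s a

/-- Receiver's expected payoff of action `a` after signal `s` under belief `p`. -/
def expU2 (u₂ : Θ → S → A → ℝ) (p : Θ → ℝ) (s : S) (a : A) : ℝ :=
  ∑ θ, p θ * u₂ θ s a

/-- `BR(p, s)`: pure best responses to belief `p` after signal `s`. -/
def BRb (u₂ : Θ → S → A → ℝ) (p : Θ → ℝ) (s : S) : Set A :=
  {a | ∀ a', expU2 u₂ p s a' ≤ expU2 u₂ p s a}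

/-- `A_s^BR`: actions that best respond to some belief after `s`. -/
def ABR (u₂ : Θ → S → A → ℝ) (s : S) : Set A :=
  {a | ∃ p, IsDist p ∧ a ∈ BRb u₂ p s}

/-- Membership in `Π₂•`: a receiver behavior strategy supported on `A_s^BR` after every `s`. -/
def Rational2 (u₂ : Θ → S → A → ℝ) (π₂ : S → A → ℝ) : Prop :=
  (∀ s, IsDist (π₂ s)) ∧ ∀ s a, π₂ s a ≠ 0 → a ∈ ABR u₂ s

/-- `u₁(θ,s,π₂(·|s)) ≥ max_{s' ≠ s} u₁(θ,s',π₂(·|s'))`. -/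
def WeakBest (u₁ : Θ → S → A → ℝ) (π₂ : S → A → ℝ) (θ : Θ) (s : S) : Prop :=
  ∀ s', s' ≠ s → u1R u₁ π₂ θ s' ≤ u1R u₁ π₂ θ s

/-- `u₁(θ,s,π₂(·|s)) > max_{s' ≠ s} u₁(θ,s',π₂(·|s'))`. -/
def StrictBest (u₁ : Θ → S → A → ℝ) (π₂ : S → A → ℝ) (θ : Θ) (s : S) : Prop :=
  ∀ s', s' ≠ s → u1R u₁ π₂ θ s' < u1R u₁ π₂ θ s

/-- `θ' ≿_s θ''`: `s` is more rationally-compatible with `θ'` than with `θ''`. -/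
def MoreCompat (u₁ u₂ : Θ → S → A → ℝ) (s : S) (θ' θ'' : Θ) : Prop :=
  ∀ π₂, Rational2 u₂ π₂ → WeakBest u₁ π₂ θ'' s → StrictBest u₁ π₂ θ' s

/-- `s` maximizes `s' ↦ u₁(θ, s', π₂(·|s'))`. -/
def GlobalBest (u₁ : Θ → S → A → ℝ) (π₂ : S → A → ℝ) (θ : Θ) (s : S) : Prop :=
  ∀ s', u1R u₁ π₂ θ s' ≤ u1R u₁ π₂ θ s

/-- `S_θ`: signals that best respond to some (not necessarily rational) receiver strategy. -/
def Sθ (u₁ : Θ → S → A → ℝ) (θ : Θ) : Set S :=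
  {s | ∃ π₂ : S → A → ℝ, (∀ s', IsDist (π₂ s')) ∧ GlobalBest u₁ π₂ θ s}

/-- `Θ_s`: types for which `s` is not dominated. -/
def Θtypes (u₁ : Θ → S → A → ℝ) (s : S) : Set Θ := {θ | s ∈ Sθ u₁ θ}

/-- Membership in `Π₁•`. -/
def Rational1 (u₁ : Θ → S → A → ℝ) (π₁ : Θ → S → ℝ) : Prop :=
  (∀ θ, IsDist (π₁ θ)) ∧ ∀ θ s, π₁ θ s ≠ 0 → s ∈ Sθ u₁ θ

/-- Nash equilibrium of the signaling game. -/
def NashEq (lam : Θ → ℝ) (u₁ u₂ : Θ → S → A → ℝ)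
    (π₁ : Θ → S → ℝ) (π₂ : S → A → ℝ) : Prop :=
  (∀ θ, IsDist (π₁ θ)) ∧ (∀ s, IsDist (π₂ s)) ∧
  (∀ θ s, π₁ θ s ≠ 0 → GlobalBest u₁ π₂ θ s) ∧
  (∀ s, (∃ θ, π₁ θ s ≠ 0) → ∀ a, π₂ s a ≠ 0 →
    ∀ a', ∑ θ, lam θ * π₁ θ s * u₂ θ s a' ≤ ∑ θ, lam θ * π₁ θ s * u₂ θ s a)

/-- Equilibrium expected payoff `E_π[u₁ | θ]`. -/
def eqPayoff (u₁ : Θ → S → A → ℝ) (π₁ : Θ → S → ℝ) (π₂ : S → A → ℝ) (θ : Θ) : ℝ :=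
  ∑ s, π₁ θ s * u1R u₁ π₂ θ s

/-- `s` is off the path of play of `π₁`. -/
def OffPath (π₁ : Θ → S → ℝ) (s : S) : Prop := ∀ θ, π₁ θ s = 0

/-- `J̃(s, π)`: types for which some best response to `s` weakly improves on the equilibrium. -/
def Jt (u₁ u₂ : Θ → S → A → ℝ) (π₁ : Θ → S → ℝ) (π₂ : S → A → ℝ) (s : S) : Set Θ :=
  {θ | ∃ a ∈ ABR u₂ s, eqPayoff u₁ π₁ π₂ θ ≤ u₁ θ s a}

/-- The odds-ratio condition defining `P_{θ'▷θ''}`. -/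
def OddsLe (lam : Θ → ℝ) (θ' θ'' : Θ) (p : Θ → ℝ) : Prop :=
  p θ'' * lam θ' ≤ lam θ'' * p θ'

/-- `Δ(T)`: beliefs supported on `T`. -/
def DeltaOn {Θ : Type*} [Fintype Θ] (T : Set Θ) : Set (Θ → ℝ) :=
  {p | IsDist p ∧ ∀ θ ∉ T, p θ = 0}

/-- `P̃(s, π)`: rationality-compatible beliefs at profile `π`. -/
def Pt (lam : Θ → ℝ) (u₁ u₂ : Θ → S → A → ℝ) (π₁ : Θ → S → ℝ) (π₂ : S → A → ℝ)
    (s : S) : Set (Θ → ℝ) :=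
  if (Jt u₁ u₂ π₁ π₂ s).Nonempty then
    DeltaOn (Jt u₁ u₂ π₁ π₂ s) ∩
      {p | ∀ θ' θ'', MoreCompat u₁ u₂ s θ' θ'' → OddsLe lam θ' θ'' p}
  else DeltaOn (Θtypes u₁ s)

/-- Rationality-compatible equilibrium. -/
def RCE (lam : Θ → ℝ) (u₁ u₂ : Θ → S → A → ℝ)
    (π₁ : Θ → S → ℝ) (π₂ : S → A → ℝ) : Prop :=
  NashEq lam u₁ u₂ π₁ π₂ ∧
  ∀ s a, π₂ s a ≠ 0 → ∃ p ∈ Pt lam u₁ u₂ π₁ π₂ s, a ∈ BRb u₂ p s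

/-- `P̂(s)`: uniformly rationality-compatible beliefs. -/
def Ph (lam : Θ → ℝ) (u₁ u₂ : Θ → S → A → ℝ) (s : S) : Set (Θ → ℝ) :=
  DeltaOn (Θtypes u₁ s) ∩
    {p | ∀ θ' θ'', MoreCompat u₁ u₂ s θ' θ'' → OddsLe lam θ' θ'' p}

/-- Uniform rationality-compatible equilibrium. -/
def URCE (lam : Θ → ℝ) (u₁ u₂ : Θ → S → A → ℝ)
    (π₁ : Θ → S → ℝ) (π₂ : S → A → ℝ) : Prop :=
  NashEq lam u₁ u₂ π₁ π₂ ∧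
  ∀ θ s, OffPath π₁ s → ∀ a, (∃ p ∈ Ph lam u₁ u₂ s, a ∈ BRb u₂ p s) →
    u₁ θ s a ≤ eqPayoff u₁ π₁ π₂ θ

/-- Receiver's expected payoff of a mixed action `α` after `s` under belief `p`. -/
def expU2m (u₂ : Θ → S → A → ℝ) (p : Θ → ℝ) (s : S) (α : A → ℝ) : ℝ :=
  ∑ θ, p θ * ∑ a, α a * u₂ θ s a

/-- `MBR(p, s)`: mixed best responses to belief `p` after `s`. -/
def MBRb (u₂ : Θ → S → A → ℝ) (p : Θ → ℝ) (s : S) : Set (A → ℝ) :=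
  {α | IsDist α ∧ ∀ α', IsDist α' → expU2m u₂ p s α' ≤ expU2m u₂ p s α}

/-- `MBR(s)`. -/
def MBR (u₂ : Θ → S → A → ℝ) (s : S) : Set (A → ℝ) :=
  {α | ∃ p, IsDist p ∧ α ∈ MBRb u₂ p s}

/-- `u₁(θ, s, α)` for a mixed action `α`. -/
def u1m (u₁ : Θ → S → A → ℝ) (θ : Θ) (s : S) (α : A → ℝ) : ℝ :=
  ∑ a, α a * u₁ θ s a

/-- `D(θ, s; π)`. -/
def Dset (u₁ u₂ : Θ → S → A → ℝ) (π₁ : Θ → S → ℝ) (π₂ : S → A → ℝ)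
    (θ : Θ) (s : S) : Set (A → ℝ) :=
  {α | α ∈ MBR u₂ s ∧ eqPayoff u₁ π₁ π₂ θ < u1m u₁ θ s α}

/-- `D°(θ, s; π)`. -/
def D0set (u₁ u₂ : Θ → S → A → ℝ) (π₁ : Θ → S → ℝ) (π₂ : S → A → ℝ)
    (θ : Θ) (s : S) : Set (A → ℝ) :=
  {α | α ∈ MBR u₂ s ∧ eqPayoff u₁ π₁ π₂ θ = u1m u₁ θ s α}

/-! ### The education signaling game -/

/-- Worker types. -/
inductive Ty | H | L
deriving DecidableEq

instance : Fintype Ty := ⟨{Ty.H, Ty.L}, fun x => by cases x <;> simp⟩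

/-- Education levels (signals): None, College, Ph.D. -/
inductive Sg | N | C | D
deriving DecidableEq

instance : Fintype Sg := ⟨{Sg.N, Sg.C, Sg.D}, fun x => by cases x <;> simp⟩

/-- Wages (receiver actions). -/
inductive Ac | low | med | high
deriving DecidableEq

instance : Fintype Ac := ⟨{Ac.low, Ac.med, Ac.high}, fun x => by cases x <;> simp⟩

/-- Type distribution: both types equally likely. -/
def lamE : Ty → ℝ := fun _ => 1 / 2

/-- Wage utility. -/
def z : Ac → ℝ
  | .low => 0
  | .med => 6
  | .high => 9

/-- Consumption value of (ability, education). -/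
def v : Ty → Sg → ℝ
  | .H, .N => 0
  | .L, .N => 0
  | .H, .C => 2
  | .L, .C => 1
  | .H, .D => -2
  | .L, .D => -4

/-- Worker (sender) payoffs. -/
def u1E (θ : Ty) (s : Sg) (a : Ac) : ℝ := z a + v θ s

/-- Employer (receiver) payoffs. -/
def u2E : Ty → Sg → Ac → ℝ
  | .H, .N, .low => -2
  | .H, .N, .med => 0
  | .H, .N, .high => 1
  | .L, .N, .low => 1
  | .L, .N, .med => 0
  | .L, .N, .high => -2
  | .H, .C, .low => -1
  | .H, .C, .med => 1
  | .H, .C, .high => 2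
  | .L, .C, .low => 2
  | .L, .C, .med => 1
  | .L, .C, .high => -1
  | .H, .D, .low => 0
  | .H, .D, .med => 2
  | .H, .D, .high => 3
  | .L, .D, .low => 3
  | .L, .D, .med => 2
  | .L, .D, .high => 0

/-- The employer strategy: low wage after N and C, medium wage after D. -/
def pi2D : Sg → Ac → ℝ
  | .N, .low => 1
  | .C, .low => 1
  | .D, .med => 1
  | _, _ => 0


/-! ### Auxiliary material for the proof -/

def pi1E : Ty → Sg → ℝ := fun _ s => if s = Sg.D then 1 else 0

lemma sum_Ty (f : Ty → ℝ) : ∑ x, f x = f .H + f .L := by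
  rw [show (univ : Finset Ty) = {.H, .L} from rfl]; simp

lemma sum_Sg (f : Sg → ℝ) : ∑ x, f x = f .N + f .C + f .D := by
  rw [show (univ : Finset Sg) = {.N, .C, .D} from rfl]; simp; ring

lemma sum_Ac (f : Ac → ℝ) : ∑ x, f x = f .low + f .med + f .high := by
  rw [show (univ : Finset Ac) = {.low, .med, .high} from rfl]; simp; ring

/-- point mass on H -/
def dH : Ty → ℝ := fun θ => if θ = Ty.H then 1 else 0
/-- point mass on L -/
def dL : Ty → ℝ := fun θ => if θ = Ty.L then 1 else 0
/-- uniform belief -/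
def unifB : Ty → ℝ := fun _ => 1/2

lemma isDist_dH : IsDist dH := by
  constructor
  · intro x; cases x <;> simp [dH]
  · rw [sum_Ty]; simp [dH]

lemma isDist_dL : IsDist dL := by
  constructor
  · intro x; cases x <;> simp [dL]
  · rw [sum_Ty]; simp [dL]

lemma isDist_unifB : IsDist unifB := by
  constructor
  · intro x; norm_num [unifB]
  · rw [sum_Ty]; norm_num [unifB]

lemma highABR_N : Ac.high ∈ ABR u2E Sg.N := by
  refine ⟨dH, isDist_dH, ?_⟩
  intro a'; cases a' <;> norm_num [expU2, sum_Ty, dH, u2E]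

lemma highABR_C : Ac.high ∈ ABR u2E Sg.C := by
  refine ⟨dH, isDist_dH, ?_⟩
  intro a'; cases a' <;> norm_num [expU2, sum_Ty, dH, u2E]

lemma highABR_D : Ac.high ∈ ABR u2E Sg.D := by
  refine ⟨dH, isDist_dH, ?_⟩
  intro a'; cases a' <;> norm_num [expU2, sum_Ty, dH, u2E]

lemma lowABR_N : Ac.low ∈ ABR u2E Sg.N := by
  refine ⟨dL, isDist_dL, ?_⟩
  intro a'; cases a' <;> norm_num [expU2, sum_Ty, dL, u2E]

lemma lowABR_C : Ac.low ∈ ABR u2E Sg.C := by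
  refine ⟨dL, isDist_dL, ?_⟩
  intro a'; cases a' <;> norm_num [expU2, sum_Ty, dL, u2E]

lemma lowABR_D : Ac.low ∈ ABR u2E Sg.D := by
  refine ⟨dL, isDist_dL, ?_⟩
  intro a'; cases a' <;> norm_num [expU2, sum_Ty, dL, u2E]

lemma medABR_C : Ac.med ∈ ABR u2E Sg.C := by
  refine ⟨unifB, isDist_unifB, ?_⟩
  intro a'; cases a' <;> norm_num [expU2, sum_Ty, unifB, u2E]

lemma medABR_D : Ac.med ∈ ABR u2E Sg.D := by
  refine ⟨unifB, isDist_unifB, ?_⟩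
  intro a'; cases a' <;> norm_num [expU2, sum_Ty, unifB, u2E]

lemma eqP_H : eqPayoff u1E pi1E pi2D Ty.H = 4 := by
  norm_num [eqPayoff, sum_Sg, pi1E, u1R, sum_Ac, pi2D, u1E, z, v]

lemma eqP_L : eqPayoff u1E pi1E pi2D Ty.L = 2 := by
  norm_num [eqPayoff, sum_Sg, pi1E, u1R, sum_Ac, pi2D, u1E, z, v]

/-- receiver counterexample strategy for `¬ H ≿_N L` -/
def piN : Sg → Ac → ℝ
  | .N, .high => 1
  | .C, .med => 2/3
  | .C, .high => 1/3
  | .D, .low => 1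
  | _, _ => 0

lemma rat2_piN : Rational2 u2E piN := by
  constructor
  · intro s
    constructor
    · intro a; cases s <;> cases a <;> norm_num [piN]
    · cases s <;> (rw [sum_Ac]; norm_num [piN])
  · intro s a h
    cases s <;> cases a <;>
      first
        | exact absurd rfl h
        | exact highABR_N
        | exact medABR_C
        | exact highABR_C
        | exact lowABR_D

lemma notMC_N : ¬ MoreCompat u1E u2E Sg.N Ty.H Ty.L := by
  intro h
  have hw : WeakBest u1E piN Ty.L Sg.N := by
    intro s' _
    cases s' <;> norm_num [u1R, sum_Ac, piN, u1E, z, v]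
  have := h piN rat2_piN hw Sg.C (by simp)
  norm_num [u1R, sum_Ac, piN, u1E, z, v] at this

/-- receiver counterexample strategy for `¬ H ≿_C L` -/
def piC : Sg → Ac → ℝ
  | .N, .low => 1
  | .C, .low => 1
  | .D, .med => 5/6
  | .D, .low => 1/6
  | _, _ => 0

lemma rat2_piC : Rational2 u2E piC := by
  constructor
  · intro s
    constructor
    · intro a; cases s <;> cases a <;> norm_num [piC]
    · cases s <;> (rw [sum_Ac]; norm_num [piC])
  · intro s a h
    cases s <;> cases a <;>
      first
        | exact absurd rfl h
        | exact lowABR_N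
        | exact lowABR_C
        | exact lowABR_D
        | exact medABR_D

lemma notMC_C : ¬ MoreCompat u1E u2E Sg.C Ty.H Ty.L := by
  intro h
  have hw : WeakBest u1E piC Ty.L Sg.C := by
    intro s' _
    cases s' <;> norm_num [u1R, sum_Ac, piC, u1E, z, v]
  have := h piC rat2_piC hw Sg.D (by simp)
  norm_num [u1R, sum_Ac, piC, u1E, z, v] at this

/-- receiver strategy showing C is a global best reply for both types -/
def piG : Sg → Ac → ℝ
  | .N, .low => 1
  | .C, .high => 1
  | .D, .low => 1
  | _, _ => 0

lemma memΘC : ∀ θ : Ty, θ ∈ Θtypes u1E Sg.C := by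
  intro θ
  refine ⟨piG, ?_, ?_⟩
  · intro s
    constructor
    · intro a; cases s <;> cases a <;> norm_num [piG]
    · cases s <;> (rw [sum_Ac]; norm_num [piG])
  · intro s'
    cases θ <;> cases s' <;> norm_num [u1R, sum_Ac, piG, u1E, z, v]

lemma memJt_H_D : Ty.H ∈ Jt u1E u2E pi1E pi2D Sg.D :=
  ⟨Ac.high, highABR_D, by rw [eqP_H]; norm_num [u1E, z, v]⟩

lemma memJt_L_D : Ty.L ∈ Jt u1E u2E pi1E pi2D Sg.D :=
  ⟨Ac.high, highABR_D, by rw [eqP_L]; norm_num [u1E, z, v]⟩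

lemma memJt_L_N : Ty.L ∈ Jt u1E u2E pi1E pi2D Sg.N :=
  ⟨Ac.high, highABR_N, by rw [eqP_L]; norm_num [u1E, z, v]⟩

lemma memJt_L_C : Ty.L ∈ Jt u1E u2E pi1E pi2D Sg.C :=
  ⟨Ac.high, highABR_C, by rw [eqP_L]; norm_num [u1E, z, v]⟩


/-- in the education game, the profile where both worker types choose D,
and the employer pays low after N and C and medium after D, is an RCE but not a uRCE. -/
theorem education_pooling_on_D_is_RCE_not_uRCE :
    RCE lamE u1E u2E (fun _ s => if s = Sg.D then 1 else 0) pi2D ∧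
    ¬ URCE lamE u1E u2E (fun _ s => if s = Sg.D then 1 else 0) pi2D := by
  show RCE lamE u1E u2E pi1E pi2D ∧ ¬ URCE lamE u1E u2E pi1E pi2D
  constructor
  · constructor
    · -- Nash equilibrium
      refine ⟨?_, ?_, ?_, ?_⟩
      · intro θ
        constructor
        · intro s; cases s <;> simp [pi1E]
        · rw [sum_Sg]; simp [pi1E]
      · intro s
        constructor
        · intro a; cases s <;> cases a <;> norm_num [pi2D]
        · cases s <;> (rw [sum_Ac]; norm_num [pi2D])
      · intro θ s hs
        cases s
        · exact absurd (by simp [pi1E]) hs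
        · exact absurd (by simp [pi1E]) hs
        · intro s'
          cases θ <;> cases s' <;> norm_num [u1R, sum_Ac, pi2D, u1E, z, v]
      · intro s hs a ha a'
        cases s
        · obtain ⟨θ, hθ⟩ := hs; exact absurd (by simp [pi1E]) hθ
        · obtain ⟨θ, hθ⟩ := hs; exact absurd (by simp [pi1E]) hθ
        · cases a
          · exact absurd (by norm_num [pi2D]) ha
          · cases a' <;> norm_num [sum_Ty, lamE, pi1E, pi2D, u2E]
          · exact absurd (by norm_num [pi2D]) ha
    · -- RCE belief condition
      intro s a ha
      cases s
      · -- s = N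
        cases a
        · refine ⟨dL, ?_, ?_⟩
          · show dL ∈ Pt lamE u1E u2E pi1E pi2D Sg.N
            unfold Pt
            rw [if_pos ⟨Ty.L, memJt_L_N⟩]
            constructor
            · refine ⟨isDist_dL, ?_⟩
              intro θ hθ
              cases θ
              · simp [dL]
              · exact absurd memJt_L_N hθ
            · intro θ' θ'' hmc
              cases θ' <;> cases θ''
              · simp [OddsLe, dL, lamE]
              · exact absurd hmc notMC_N
              · simp [OddsLe, dL, lamE]
              · simp [OddsLe, dL, lamE]
          · intro a'; cases a' <;> norm_num [expU2, sum_Ty, dL, u2E]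
        · exact absurd (by norm_num [pi2D]) ha
        · exact absurd (by norm_num [pi2D]) ha
      · -- s = C
        cases a
        · refine ⟨dL, ?_, ?_⟩
          · show dL ∈ Pt lamE u1E u2E pi1E pi2D Sg.C
            unfold Pt
            rw [if_pos ⟨Ty.L, memJt_L_C⟩]
            constructor
            · refine ⟨isDist_dL, ?_⟩
              intro θ hθ
              cases θ
              · simp [dL]
              · exact absurd memJt_L_C hθ
            · intro θ' θ'' hmc
              cases θ' <;> cases θ''
              · simp [OddsLe, dL, lamE]
              · exact absurd hmc notMC_C
              · simp [OddsLe, dL, lamE]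
              · simp [OddsLe, dL, lamE]
          · intro a'; cases a' <;> norm_num [expU2, sum_Ty, dL, u2E]
        · exact absurd (by norm_num [pi2D]) ha
        · exact absurd (by norm_num [pi2D]) ha
      · -- s = D
        cases a
        · exact absurd (by norm_num [pi2D]) ha
        · refine ⟨unifB, ?_, ?_⟩
          · show unifB ∈ Pt lamE u1E u2E pi1E pi2D Sg.D
            unfold Pt
            rw [if_pos ⟨Ty.H, memJt_H_D⟩]
            constructor
            · refine ⟨isDist_unifB, ?_⟩
              intro θ hθ
              cases θ
              · exact absurd memJt_H_D hθ
              · exact absurd memJt_L_D hθ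
            · intro θ' θ'' _
              norm_num [OddsLe, unifB, lamE]
          · intro a'; cases a' <;> norm_num [expU2, sum_Ty, unifB, u2E]
        · exact absurd (by norm_num [pi2D]) ha
  · -- not a uRCE
    rintro ⟨-, h2⟩
    have hC : OffPath pi1E Sg.C := by intro θ; simp [pi1E]
    have hmem : ∃ p ∈ Ph lamE u1E u2E Sg.C, Ac.med ∈ BRb u2E p Sg.C := by
      refine ⟨unifB, ⟨⟨isDist_unifB, fun θ hθ => absurd (memΘC θ) hθ⟩, ?_⟩, ?_⟩
      · intro θ' θ'' _
        norm_num [OddsLe, unifB, lamE]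
      · intro a'; cases a' <;> norm_num [expU2, sum_Ty, unifB, u2E]
    have := h2 Ty.H Sg.C hC Ac.med hmem
    rw [eqP_H] at this
    norm_num [u1E, z, v] at this


end
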